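/- Suppose the four length-N sequences a,b,c,d satisfy: (a,b) and (c,d) are (N,Z)-CZCPs, C(a,c)(τ)+C(b,d)(τ)=0 for all τ, and C(a,d)(τ)+C(b,c)(τ)=0 for all |τ|∈{N−Z,…,N−1}. Then the collection {S_t : t∈Z_2^n} ∪ {S'_{t'} : t'∈Z_2^n}, where S_t={ω^{(q/2)t·y}a, ω^{(q/2)t·y}b : y∈Z_2^n} and S'_{t'}={ω^{(q/2)t'·y}c, ω^{(q/2)t'·y}d : y∈Z_2^n} each ordered cyclically (all a-multiples then all b-multiples, resp. c then d), forms a (2^{n+1}, 2^{n+1}, N, Z)-CZCSS. -/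

import Mathlib

open Finset Complex

/-- ω = exp(2πi/q). -/
noncomputable def omegaq (q : ℕ) : ℂ := Complex.exp (2 * Real.pi * Complex.I / q)

/-- Aperiodic cross-correlation of two length-`N` complex sequences at shift `τ`. -/
noncomputable def acorr (N : ℕ) (x y : ℕ → ℂ) (τ : ℕ) : ℂ :=
  ∑ i ∈ Finset.range (N - τ), x i * (starRingEnd ℂ) (y (i + τ))

/-- `k`-th binary digit of `i`. -/
def bit (i k : ℕ) : ℕ := (i / 2 ^ k) % 2

lemma acorr_smul (N : ℕ) (x y : ℕ → ℂ) (τ : ℕ) (α β : ℂ) :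
    acorr N (fun j => α * x j) (fun j => β * y j) τ
      = α * (starRingEnd ℂ) β * acorr N x y τ := by
  simp only [acorr, Finset.mul_sum, map_mul]
  exact Finset.sum_congr rfl fun i _ => by ring

noncomputable def sg (n : ℕ) (v : Fin n → Fin 2) (i : ℕ) : ℂ :=
  (-1) ^ (∑ k : Fin n, (v k : ℕ) * bit (i % 2 ^ n) (k : ℕ))

lemma sg_conj (n : ℕ) (v : Fin n → Fin 2) (i : ℕ) :
    (starRingEnd ℂ) (sg n v i) = sg n v i := by
  simp [sg]

lemma sg_mul_self (n : ℕ) (v : Fin n → Fin 2) (i : ℕ) :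
    sg n v i * sg n v i = 1 := by
  rw [sg, ← pow_add]
  exact Even.neg_one_pow ⟨_, rfl⟩

lemma sg_shift (n : ℕ) (v : Fin n → Fin 2) (j : ℕ) :
    sg n v (2 ^ n + j) = sg n v j := by
  simp [sg, Nat.add_mod_left]

lemma sg_pow (n : ℕ) (v : Fin n → Fin 2) : sg n v (2 ^ n) = sg n v 0 := by
  simp [sg, Nat.mod_self]

lemma sum_range_two_pow_succ (n : ℕ) (f : ℕ → ℂ) :
    ∑ i ∈ Finset.range (2 ^ (n + 1)), f i
      = ∑ j ∈ Finset.range (2 ^ n), f j + ∑ j ∈ Finset.range (2 ^ n), f (2 ^ n + j) := by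
  have h : 2 ^ (n + 1) = 2 ^ n + 2 ^ n := by ring
  rw [Finset.range_eq_Ico, h,
    ← Finset.sum_Ico_consecutive f (Nat.zero_le (2 ^ n)) (Nat.le_add_right _ _)]
  congr 1
  rw [Finset.sum_Ico_eq_sum_range]
  simp
  rw [Finset.sum_Ico_eq_sum_range]
  simp

lemma bit_high (i n : ℕ) (h : i < 2 ^ n) : bit i n = 0 := by
  simp [bit, Nat.div_eq_of_lt h]

lemma bit_add_high (j n : ℕ) (h : j < 2 ^ n) : bit (2 ^ n + j) n = 1 := by
  unfold bit
  rw [Nat.add_comm, Nat.add_div_right _ (pow_pos two_pos n), Nat.div_eq_of_lt h]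

lemma bit_add_low (j n k : ℕ) (hk : k < n) : bit (2 ^ n + j) k = bit j k := by
  unfold bit
  have h1 : 2 ^ n + j = 2 ^ k * (2 * 2 ^ (n - k - 1)) + j := by
    rw [show 2 * 2 ^ (n - k - 1) = 2 ^ (n - k) from by rw [← pow_succ']; congr 1; omega,
      ← pow_add]
    congr 2
    omega
  rw [h1, Nat.mul_add_div (pow_pos two_pos k), Nat.mul_add_mod]

lemma charSum (E : ℕ → ℕ) (n : ℕ) (h : ∃ k, k < n ∧ Odd (E k)) :
    ∑ i ∈ Finset.range (2 ^ n), (-1 : ℂ) ^ (∑ k ∈ Finset.range n, E k * bit i k) = 0 := by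
  induction n with
  | zero => obtain ⟨k, hk, _⟩ := h; omega
  | succ n ih =>
    obtain ⟨k, hk, hodd⟩ := h
    rw [sum_range_two_pow_succ]
    have t1 : ∀ j ∈ Finset.range (2 ^ n),
        (-1 : ℂ) ^ (∑ k ∈ Finset.range (n + 1), E k * bit j k)
          = (-1 : ℂ) ^ (∑ k ∈ Finset.range n, E k * bit j k) := by
      intro j hj
      rw [Finset.sum_range_succ, bit_high j n (Finset.mem_range.mp hj), Nat.mul_zero,
        Nat.add_zero]
    have t2 : ∀ j ∈ Finset.range (2 ^ n),
        (-1 : ℂ) ^ (∑ k ∈ Finset.range (n + 1), E k * bit (2 ^ n + j) k)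
          = (-1 : ℂ) ^ (∑ k ∈ Finset.range n, E k * bit j k) * (-1 : ℂ) ^ (E n) := by
      intro j hj
      rw [Finset.sum_range_succ, bit_add_high j n (Finset.mem_range.mp hj), Nat.mul_one,
        pow_add]
      congr 2
      exact Finset.sum_congr rfl fun k hk => by
        rw [bit_add_low j n k (Finset.mem_range.mp hk)]
    rw [Finset.sum_congr rfl t1, Finset.sum_congr rfl t2, ← Finset.sum_mul]
    by_cases hkn : k = n
    · subst hkn
      rw [Odd.neg_one_pow hodd]
      ring
    · have hz := ih ⟨k, by omega, hodd⟩
      rw [hz]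
      ring

lemma sg_orth (n : ℕ) (v w : Fin n → Fin 2) (hvw : v ≠ w) :
    ∑ j ∈ Finset.range (2 ^ n), sg n v j * sg n w j = 0 := by
  obtain ⟨k0, hk0⟩ := Function.ne_iff.mp hvw
  set E : ℕ → ℕ := fun k => if h : k < n then ((v ⟨k, h⟩ : ℕ) + (w ⟨k, h⟩ : ℕ)) else 0 with hE
  have hodd : Odd (E (k0 : ℕ)) := by
    have h1 : (v k0 : ℕ) ≠ (w k0 : ℕ) := fun h => hk0 (Fin.ext h)
    have h2 := (v k0).isLt
    have h3 := (w k0).isLt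
    simp only [hE, k0.isLt, dif_pos, Fin.eta]
    rw [Nat.odd_iff]
    omega
  have hcs := charSum E n ⟨k0, k0.isLt, hodd⟩
  rw [← hcs]
  refine Finset.sum_congr rfl fun j hj => ?_
  have hjlt := Finset.mem_range.mp hj
  simp only [sg]
  rw [Nat.mod_eq_of_lt hjlt, ← pow_add]
  congr 1
  rw [← Fin.sum_univ_eq_sum_range (fun k => E k * bit j k) n, ← Finset.sum_add_distrib]
  refine Finset.sum_congr rfl fun k _ => ?_
  simp only [hE, k.isLt, dif_pos, Fin.eta]
  ring

lemma omegaq_pow_half (q : ℕ) (hq : 2 ≤ q) (hq2 : 2 ∣ q) :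
    omegaq q ^ (q / 2) = -1 := by
  have hq0 : (q : ℂ) ≠ 0 := Nat.cast_ne_zero.mpr (by omega)
  have h2 : ((q / 2 : ℕ) : ℂ) * 2 = (q : ℂ) := by
    exact_mod_cast congrArg (Nat.cast : ℕ → ℂ) (Nat.div_mul_cancel hq2)
  rw [omegaq, ← Complex.exp_nat_mul]
  rw [show ((q / 2 : ℕ) : ℂ) * (2 * (Real.pi : ℂ) * Complex.I / (q : ℂ))
      = (Real.pi : ℂ) * Complex.I from by
    field_simp
    linear_combination h2]
  exact Complex.exp_pi_mul_I

def sqsel (a b c d : ℕ → ℂ) (n : ℕ) (fl : Bool) (i : ℕ) : ℕ → ℂ :=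
  if fl = false then (if i < 2 ^ n then a else b) else (if i < 2 ^ n then c else d)

/-- Theorem 1, abstract form: from two CZCPs (a,b), (c,d) with the two
extra cross-correlation properties, the family {S_t} ∪ {S'_{t'}} (t,t' ∈ Z_2^n) is a
(2^{n+1}, 2^{n+1}, N, Z)-CZCSS.  Sets are indexed by `p : Bool × (Fin n → Fin 2)`
(`false` = unprimed S, `true` = primed S'), and within a set the 2^{n+1} members are
indexed by `i < 2^{n+1}`: first the scaled copies of a (resp. c) for y = bits of i,
then the scaled copies of b (resp. d). -/
theorem stmt_16 (q n N Z : ℕ) (hq : 2 ≤ q) (hq2 : 2 ∣ q)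
    (a b c d : ℕ → ℂ)
    (hab1 : ∀ τ : ℕ, (1 ≤ τ ∧ τ ≤ Z) ∨ (N - Z ≤ τ ∧ τ ≤ N - 1) →
      acorr N a a τ + acorr N b b τ = 0)
    (hab2 : ∀ τ : ℕ, N - Z ≤ τ → τ ≤ N - 1 →
      acorr N a b τ + acorr N b a τ = 0)
    (hcd1 : ∀ τ : ℕ, (1 ≤ τ ∧ τ ≤ Z) ∨ (N - Z ≤ τ ∧ τ ≤ N - 1) →
      acorr N c c τ + acorr N d d τ = 0)
    (hcd2 : ∀ τ : ℕ, N - Z ≤ τ → τ ≤ N - 1 →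
      acorr N c d τ + acorr N d c τ = 0)
    (hac : ∀ τ : ℕ, acorr N a c τ + acorr N b d τ = 0)
    (hac' : ∀ τ : ℕ, acorr N c a τ + acorr N d b τ = 0)
    (had : ∀ τ : ℕ, N - Z ≤ τ → τ ≤ N - 1 →
      acorr N a d τ + acorr N b c τ = 0)
    (had' : ∀ τ : ℕ, N - Z ≤ τ → τ ≤ N - 1 →
      acorr N d a τ + acorr N c b τ = 0)
    (memb : Bool × (Fin n → Fin 2) → ℕ → ℕ → ℂ)
    (hmemb : ∀ p i j, memb p i j =
      omegaq q ^ (q / 2 * ∑ k : Fin n, (p.2 k : ℕ) * bit (i % 2 ^ n) (k : ℕ)) *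
        (if p.1 = false then (if i < 2 ^ n then a j else b j)
         else (if i < 2 ^ n then c j else d j))) :
    -- P1
    (∀ p, ∀ τ : ℕ, (1 ≤ τ ∧ τ ≤ Z) ∨ (N - Z ≤ τ ∧ τ ≤ N - 1) →
      ∑ i ∈ Finset.range (2 ^ (n + 1)), acorr N (memb p i) (memb p i) τ = 0) ∧
    -- P2
    (∀ p, ∀ τ : ℕ, N - Z ≤ τ → τ ≤ N - 1 →
      ∑ i ∈ Finset.range (2 ^ (n + 1)),
        acorr N (memb p i) (memb p ((i + 1) % 2 ^ (n + 1))) τ = 0) ∧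
    -- P3
    (∀ p p', p ≠ p' → ∀ τ : ℕ,
        τ = 0 ∨ (1 ≤ τ ∧ τ ≤ Z) ∨ (N - Z ≤ τ ∧ τ ≤ N - 1) →
      ∑ i ∈ Finset.range (2 ^ (n + 1)), acorr N (memb p i) (memb p' i) τ = 0) ∧
    -- P4
    (∀ p p', p ≠ p' → ∀ τ : ℕ, N - Z ≤ τ → τ ≤ N - 1 →
      ∑ i ∈ Finset.range (2 ^ (n + 1)),
        acorr N (memb p i) (memb p' ((i + 1) % 2 ^ (n + 1))) τ = 0) := by
  have h2n : 0 < 2 ^ n := pow_pos two_pos n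
  have hps : (2 : ℕ) ^ (n + 1) = 2 ^ n + 2 ^ n := by rw [pow_succ]; omega
  have homega : ∀ m : ℕ, omegaq q ^ (q / 2 * m) = (-1 : ℂ) ^ m := fun m => by
    rw [pow_mul, omegaq_pow_half q hq hq2]
  have hmemb' : ∀ (fl : Bool) (v : Fin n → Fin 2) (i : ℕ),
      memb (fl, v) i = fun j => sg n v i * sqsel a b c d n fl i j := by
    intro fl v i
    funext j
    rw [hmemb, homega]
    simp only [sg, sqsel]
    cases fl <;> by_cases h2 : i < 2 ^ n <;> simp [h2]
  have hcore : ∀ (fl fl' : Bool) (v w : Fin n → Fin 2) (i i' τ : ℕ),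
      acorr N (memb (fl, v) i) (memb (fl', w) i') τ
        = sg n v i * sg n w i' * acorr N (sqsel a b c d n fl i) (sqsel a b c d n fl' i') τ := by
    intro fl fl' v w i i' τ
    rw [hmemb', hmemb', acorr_smul, sg_conj]
  have hA : ∀ i : ℕ, i < 2 ^ n → sqsel a b c d n false i = a := fun i h => by simp [sqsel, h]
  have hB : ∀ i : ℕ, ¬ i < 2 ^ n → sqsel a b c d n false i = b := fun i h => by simp [sqsel, h]
  have hC : ∀ i : ℕ, i < 2 ^ n → sqsel a b c d n true i = c := fun i h => by simp [sqsel, h]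
  have hD : ∀ i : ℕ, ¬ i < 2 ^ n → sqsel a b c d n true i = d := fun i h => by simp [sqsel, h]
  have hsql : ∀ (fl : Bool) (i : ℕ), i < 2 ^ n →
      sqsel a b c d n fl i = (if fl = false then a else c) := by
    intro fl i h
    cases fl
    · rw [hA i h, if_pos rfl]
    · rw [hC i h, if_neg (by simp)]
  have hsqh : ∀ (fl : Bool) (i : ℕ), ¬ i < 2 ^ n →
      sqsel a b c d n fl i = (if fl = false then b else d) := by
    intro fl i h
    cases fl
    · rw [hB i h, if_pos rfl]
    · rw [hD i h, if_neg (by simp)]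
  -- common engine for P2 and P4
  have hP24gen : ∀ (fl fl' : Bool) (v w : Fin n → Fin 2) (x1 x2 y1 y2 : ℕ → ℂ) (τ : ℕ),
      (∀ i, i < 2 ^ n → sqsel a b c d n fl i = x1) →
      (∀ i, ¬ i < 2 ^ n → sqsel a b c d n fl i = x2) →
      (∀ i, i < 2 ^ n → sqsel a b c d n fl' i = y1) →
      (∀ i, ¬ i < 2 ^ n → sqsel a b c d n fl' i = y2) →
      acorr N x1 y1 τ + acorr N x2 y2 τ = 0 →
      acorr N x1 y2 τ + acorr N x2 y1 τ = 0 →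
      ∑ i ∈ Finset.range (2 ^ (n + 1)),
        acorr N (memb (fl, v) i) (memb (fl', w) ((i + 1) % 2 ^ (n + 1))) τ = 0 := by
    intro fl fl' v w x1 x2 y1 y2 τ hl hh hl' hh' hz1 hz2
    have hlt : 2 ^ n < 2 ^ (n + 1) := by omega
    have s1 : ∀ G : ℕ → ℂ, ∑ i ∈ Finset.range (2 ^ n), G i
        = ∑ i ∈ Finset.range (2 ^ n - 1), G i + G (2 ^ n - 1) := by
      intro G
      calc ∑ i ∈ Finset.range (2 ^ n), G i
          = ∑ i ∈ Finset.range ((2 ^ n - 1) + 1), G i := by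
            rw [show (2 ^ n - 1) + 1 = 2 ^ n from by omega]
        _ = _ := Finset.sum_range_succ G (2 ^ n - 1)
    have t1 : ∀ j, j < 2 ^ n - 1 →
        acorr N (memb (fl, v) j) (memb (fl', w) ((j + 1) % 2 ^ (n + 1))) τ
          = sg n v j * sg n w (j + 1) * acorr N x1 y1 τ := by
      intro j hj
      rw [Nat.mod_eq_of_lt (by omega), hcore, hl j (by omega), hl' (j + 1) (by omega)]
    have t2 : acorr N (memb (fl, v) (2 ^ n - 1))
        (memb (fl', w) ((2 ^ n - 1 + 1) % 2 ^ (n + 1))) τ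
          = sg n v (2 ^ n - 1) * sg n w 0 * acorr N x1 y2 τ := by
      rw [show 2 ^ n - 1 + 1 = 2 ^ n from by omega, Nat.mod_eq_of_lt hlt, hcore,
        hl _ (by omega), hh' _ (by omega), sg_pow]
    have t3 : ∀ j, j < 2 ^ n - 1 →
        acorr N (memb (fl, v) (2 ^ n + j)) (memb (fl', w) ((2 ^ n + j + 1) % 2 ^ (n + 1))) τ
          = sg n v j * sg n w (j + 1) * acorr N x2 y2 τ := by
      intro j hj
      rw [Nat.mod_eq_of_lt (by omega), hcore, hh _ (by omega), hh' _ (by omega),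
        show 2 ^ n + j + 1 = 2 ^ n + (j + 1) from by omega, sg_shift, sg_shift]
    have t4 : acorr N (memb (fl, v) (2 ^ n + (2 ^ n - 1)))
        (memb (fl', w) ((2 ^ n + (2 ^ n - 1) + 1) % 2 ^ (n + 1))) τ
          = sg n v (2 ^ n - 1) * sg n w 0 * acorr N x2 y1 τ := by
      rw [show 2 ^ n + (2 ^ n - 1) + 1 = 2 ^ (n + 1) from by omega, Nat.mod_self, hcore,
        hh _ (by omega), hl' 0 h2n, sg_shift]
    rw [sum_range_two_pow_succ, s1, s1,
      Finset.sum_congr rfl (fun j hj => t1 j (Finset.mem_range.mp hj)),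
      Finset.sum_congr rfl (fun j hj => t3 j (Finset.mem_range.mp hj)), t2, t4]
    have u1 : ∑ j ∈ Finset.range (2 ^ n - 1), sg n v j * sg n w (j + 1) * acorr N x1 y1 τ
        + ∑ j ∈ Finset.range (2 ^ n - 1), sg n v j * sg n w (j + 1) * acorr N x2 y2 τ = 0 := by
      have u0 : ∀ j ∈ Finset.range (2 ^ n - 1),
          sg n v j * sg n w (j + 1) * acorr N x1 y1 τ
            + sg n v j * sg n w (j + 1) * acorr N x2 y2 τ = (0 : ℂ) :=
        fun j _ => by rw [← mul_add, hz1, mul_zero]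
      rw [← Finset.sum_add_distrib, Finset.sum_congr rfl u0]
      exact Finset.sum_const_zero
    have u2 : sg n v (2 ^ n - 1) * sg n w 0 * acorr N x1 y2 τ
        + sg n v (2 ^ n - 1) * sg n w 0 * acorr N x2 y1 τ = 0 := by
      rw [← mul_add, hz2, mul_zero]
    linear_combination u1 + u2
  refine ⟨?_, ?_, ?_, ?_⟩
  -- P1
  · rintro ⟨fl, v⟩ τ hτ
    have e1 : ∀ j ∈ Finset.range (2 ^ n), acorr N (memb (fl, v) j) (memb (fl, v) j) τ
        = acorr N (if fl = false then a else c) (if fl = false then a else c) τ :=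
      fun j hj => by
        rw [hcore, sg_mul_self, one_mul, hsql fl j (Finset.mem_range.mp hj)]
    have e2 : ∀ j ∈ Finset.range (2 ^ n),
        acorr N (memb (fl, v) (2 ^ n + j)) (memb (fl, v) (2 ^ n + j)) τ
        = acorr N (if fl = false then b else d) (if fl = false then b else d) τ :=
      fun j hj => by
        rw [hcore, sg_mul_self, one_mul, hsqh fl (2 ^ n + j) (by omega)]
    rw [sum_range_two_pow_succ, Finset.sum_congr rfl e1, Finset.sum_congr rfl e2,
      Finset.sum_const, Finset.sum_const, Finset.card_range, ← smul_add]
    cases fl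
    · rw [if_pos rfl, if_pos rfl, hab1 τ hτ, smul_zero]
    · rw [if_neg (by simp), if_neg (by simp), hcd1 τ hτ, smul_zero]
  -- P2
  · rintro ⟨fl, v⟩ τ hτ1 hτ2
    cases fl
    · exact hP24gen false false v v a b a b τ hA hB hA hB
        (hab1 τ (Or.inr ⟨hτ1, hτ2⟩)) (hab2 τ hτ1 hτ2)
    · exact hP24gen true true v v c d c d τ hC hD hC hD
        (hcd1 τ (Or.inr ⟨hτ1, hτ2⟩)) (hcd2 τ hτ1 hτ2)
  -- P3
  · rintro ⟨fl, v⟩ ⟨fl', w⟩ hne τ hτ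
    rw [sum_range_two_pow_succ]
    by_cases hfl : fl = fl'
    · subst hfl
      have hvw : v ≠ w := fun h => hne (by rw [h])
      have e1 : ∑ j ∈ Finset.range (2 ^ n), acorr N (memb (fl, v) j) (memb (fl, w) j) τ = 0 := by
        have e1' : ∀ j ∈ Finset.range (2 ^ n), acorr N (memb (fl, v) j) (memb (fl, w) j) τ
            = sg n v j * sg n w j
              * acorr N (sqsel a b c d n fl j) (sqsel a b c d n fl j) τ :=
          fun j hj => by rw [hcore]
        rw [Finset.sum_congr rfl (fun j hj => by
            rw [e1' j hj, hsql fl j (Finset.mem_range.mp hj)]), ← Finset.sum_mul,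
          sg_orth n v w hvw, zero_mul]
      have e2 : ∑ j ∈ Finset.range (2 ^ n),
          acorr N (memb (fl, v) (2 ^ n + j)) (memb (fl, w) (2 ^ n + j)) τ = 0 := by
        have e2' : ∀ j ∈ Finset.range (2 ^ n),
            acorr N (memb (fl, v) (2 ^ n + j)) (memb (fl, w) (2 ^ n + j)) τ
            = sg n v j * sg n w j
              * acorr N (sqsel a b c d n fl (2 ^ n + j)) (sqsel a b c d n fl (2 ^ n + j)) τ :=
          fun j hj => by rw [hcore, sg_shift, sg_shift]
        rw [Finset.sum_congr rfl (fun j hj => by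
            rw [e2' j hj, hsqh fl (2 ^ n + j) (by omega)]), ← Finset.sum_mul,
          sg_orth n v w hvw, zero_mul]
      rw [e1, e2, add_zero]
    · have e1 : ∀ j ∈ Finset.range (2 ^ n), acorr N (memb (fl, v) j) (memb (fl', w) j) τ
          = sg n v j * sg n w j
            * acorr N (if fl = false then a else c) (if fl' = false then a else c) τ :=
        fun j hj => by
          rw [hcore, hsql fl j (Finset.mem_range.mp hj), hsql fl' j (Finset.mem_range.mp hj)]
      have e2 : ∀ j ∈ Finset.range (2 ^ n),
          acorr N (memb (fl, v) (2 ^ n + j)) (memb (fl', w) (2 ^ n + j)) τ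
          = sg n v j * sg n w j
            * acorr N (if fl = false then b else d) (if fl' = false then b else d) τ :=
        fun j hj => by
          rw [hcore, sg_shift, sg_shift, hsqh fl _ (by omega), hsqh fl' _ (by omega)]
      rw [Finset.sum_congr rfl e1, Finset.sum_congr rfl e2, ← Finset.sum_add_distrib]
      have hzero : acorr N (if fl = false then a else c) (if fl' = false then a else c) τ
          + acorr N (if fl = false then b else d) (if fl' = false then b else d) τ = 0 := by
        cases fl <;> cases fl'
        · exact absurd rfl hfl
        · simpa using hac τ
        · simpa using hac' τ
        · exact absurd rfl hfl
      have e3 : ∀ j ∈ Finset.range (2 ^ n),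
          sg n v j * sg n w j
              * acorr N (if fl = false then a else c) (if fl' = false then a else c) τ
            + sg n v j * sg n w j
              * acorr N (if fl = false then b else d) (if fl' = false then b else d) τ
            = (0 : ℂ) :=
        fun j _ => by rw [← mul_add, hzero, mul_zero]
      rw [Finset.sum_congr rfl e3]
      exact Finset.sum_const_zero
  -- P4
  · rintro ⟨fl, v⟩ ⟨fl', w⟩ _ τ hτ1 hτ2
    cases fl <;> cases fl'
    · exact hP24gen false false v w a b a b τ hA hB hA hB
        (hab1 τ (Or.inr ⟨hτ1, hτ2⟩)) (hab2 τ hτ1 hτ2)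
    · exact hP24gen false true v w a b c d τ hA hB hC hD (hac τ) (had τ hτ1 hτ2)
    · exact hP24gen true false v w c d a b τ hC hD hA hB (hac' τ)
        (by linear_combination had' τ hτ1 hτ2)
    · exact hP24gen true true v w c d c d τ hC hD hC hD
        (hcd1 τ (Or.inr ⟨hτ1, hτ2⟩)) (hcd2 τ hτ1 hτ2)
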